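/- Assume the Continuum Hypothesis. Let X be a locally compact, locally countable Hausdorff topological space such that every closed subspace of X of cardinality at most ℵ₁ is paracompact. Then X has the Moving Off Property. -/

import Mathlib

open Set Topology

/-- A family of sets indexed by `ι` is *discrete* if every point has a neighborhood
meeting at most one member of the family. -/
def IsDiscreteFamily {ι X : Type*} [TopologicalSpace X] (U : ι → Set X) : Prop :=
  ∀ x : X, ∃ V ∈ nhds x, {i : ι | (U i ∩ V).Nonempty}.Subsingleton

/-- A *moving off collection* for `X`: a family of nonempty compact sets such that every
compact set is disjoint from some member of the family. -/
def IsMovingOff {X : Type*} [TopologicalSpace X] (𝒦 : Set (Set X)) : Prop :=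
  (∀ K ∈ 𝒦, K.Nonempty) ∧ (∀ K ∈ 𝒦, IsCompact K) ∧
    ∀ L : Set X, IsCompact L → ∃ K ∈ 𝒦, Disjoint K L

/-- The *Moving Off Property*: every moving off collection contains an infinite subfamily
of pairwise distinct sets admitting a discrete open expansion. -/
def HasMOP (X : Type*) [TopologicalSpace X] : Prop :=
  ∀ 𝒦 : Set (Set X), IsMovingOff 𝒦 →
    ∃ K : ℕ → Set X, (∀ n, K n ∈ 𝒦) ∧ Function.Injective K ∧
      ∃ U : ℕ → Set X, (∀ n, IsOpen (U n)) ∧ (∀ n, K n ⊆ U n) ∧ IsDiscreteFamily U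

/-- A space is *locally countable* if every point has a countable neighborhood. -/
def LocallyCountable (X : Type*) [TopologicalSpace X] : Prop :=
  ∀ x : X, ∃ N ∈ nhds x, N.Countable

/-! ### Auxiliary machinery -/

namespace MOPAux

universe u

open Cardinal

/-- CH transfers between universes. -/
lemma CH_transfer.{v', u'} (hCH : (Cardinal.continuum : Cardinal.{v'}) = Cardinal.aleph 1) :
    (Cardinal.continuum : Cardinal.{u'}) = Cardinal.aleph 1 := by
  have h1 : Cardinal.lift.{u'} (Cardinal.continuum : Cardinal.{v'})
      = Cardinal.lift.{u'} (Cardinal.aleph 1 : Cardinal.{v'}) := by rw [hCH]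
  rw [Cardinal.lift_continuum, Cardinal.lift_aleph, Ordinal.lift_one] at h1
  have h2 : Cardinal.lift.{v'} (Cardinal.continuum : Cardinal.{u'})
      = Cardinal.lift.{v'} (Cardinal.aleph 1 : Cardinal.{u'}) := by
    rw [Cardinal.lift_continuum, Cardinal.lift_aleph, Ordinal.lift_one]
    exact h1
  exact Cardinal.lift_injective h2

/-- Every point of a locally compact, locally countable space has a countable compact
neighborhood. -/
lemma exists_cpt_ctble_nhd {X : Type u} [TopologicalSpace X] [LocallyCompactSpace X]
    (hlc : LocallyCountable X) (x : X) :
    ∃ C : Set X, C ∈ nhds x ∧ IsCompact C ∧ C.Countable := by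
  obtain ⟨N, hN, hNc⟩ := hlc x
  obtain ⟨s, hs, hsN, hsc⟩ := local_compact_nhds hN
  exact ⟨s, hs, hsc, hNc.mono hsN⟩

/-- In a locally compact, locally countable space, compact sets are countable. -/
lemma compact_countable {X : Type u} [TopologicalSpace X] [LocallyCompactSpace X]
    (hlc : LocallyCountable X) {K : Set X} (hK : IsCompact K) : K.Countable := by
  choose c hc1 hc2 hc3 using exists_cpt_ctble_nhd hlc
  obtain ⟨t, -, ht⟩ := hK.elim_nhds_subcover c (fun x _ => hc1 x)
  exact (t.countable_toSet.biUnion (fun x _ => hc3 x)).mono ht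

/-- The collection of countable subsets of `A` has cardinality at most `(#A + 1) ^ ℵ₀`. -/
lemma card_ctble_subsets {X : Type u} (A : Set X) :
    #{S : Set X | S ⊆ A ∧ S.Countable} ≤ (#A + 1) ^ (ℵ₀ : Cardinal.{u}) := by
  have key : ∀ S : {S : Set X | S ⊆ A ∧ S.Countable}, ∃ f : ℕ → Option ↥A,
      (S : Set X) = {x | ∃ n, Option.map Subtype.val (f n) = some x} := by
    rintro ⟨S, hSA, hSc⟩
    rcases S.eq_empty_or_nonempty with rfl | hne
    · exact ⟨fun _ => none, by ext x; simp⟩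
    · obtain ⟨f, hf⟩ := hSc.exists_eq_range hne
      refine ⟨fun n => some ⟨f n, hSA (by rw [hf]; exact mem_range_self n)⟩, ?_⟩
      have hmem : ∀ x, x ∈ S ↔ ∃ n, f n = x := by
        rw [hf]; intro x; simp [eq_comm, mem_range]
      ext x
      show x ∈ S ↔ _
      rw [hmem x]
      simp
  choose Φ hΦ using key
  have hinj : Function.Injective Φ := by
    intro S₁ S₂ hss
    apply Subtype.ext
    rw [hΦ S₁, hΦ S₂, hss]
  calc #{S : Set X | S ⊆ A ∧ S.Countable} ≤ #(ℕ → Option ↥A) :=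
        Cardinal.mk_le_of_injective hinj
    _ = (#A + 1) ^ (ℵ₀ : Cardinal.{u}) := by
        rw [Cardinal.mk_arrow]
        simp [Cardinal.mk_option]

/-- Under CH, a set of cardinality at most `ℵ₁` has at most `ℵ₁` countable subsets. -/
lemma card_ctble_subsets_le {X : Type u} (CH : (Cardinal.continuum : Cardinal.{u}) = Cardinal.aleph 1)
    {A : Set X} (hA : #A ≤ Cardinal.aleph 1) :
    #{S : Set X | S ⊆ A ∧ S.Countable} ≤ Cardinal.aleph 1 := by
  refine (card_ctble_subsets A).trans ?_
  have h1 : #A + 1 ≤ (Cardinal.continuum : Cardinal.{u}) := by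
    rw [CH]
    calc #A + 1 ≤ Cardinal.aleph 1 + 1 := by gcongr
      _ = Cardinal.aleph 1 := Cardinal.add_one_eq (Cardinal.aleph0_le_aleph 1)
  calc (#A + 1) ^ (ℵ₀ : Cardinal.{u}) ≤ Cardinal.continuum ^ (ℵ₀ : Cardinal.{u}) := by
        exact Cardinal.power_le_power_right h1
    _ = Cardinal.continuum := Cardinal.continuum_power_aleph0
    _ = Cardinal.aleph 1 := CH

/-- Under CH, in a locally compact locally countable Hausdorff space, the closure of a set of
cardinality at most `ℵ₁` has cardinality at most `ℵ₁`. -/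
lemma card_closure_le {X : Type u} [TopologicalSpace X] [T2Space X] [LocallyCompactSpace X]
    (CH : (Cardinal.continuum : Cardinal.{u}) = Cardinal.aleph 1) (hlc : LocallyCountable X)
    {A : Set X} (hA : #A ≤ Cardinal.aleph 1) : #(closure A) ≤ Cardinal.aleph 1 := by
  choose c hc1 hc2 hc3 using exists_cpt_ctble_nhd hlc
  set T : Set (Set X) := {S : Set X | S ⊆ A ∧ S.Countable ∧ (closure S).Countable} with hT
  have hcov : closure A ⊆ ⋃ S : T, closure (S : Set X) := by
    intro x hx
    have hxm : x ∈ closure (A ∩ c x) := by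
      rw [mem_closure_iff_nhds] at hx ⊢
      intro t ht
      obtain ⟨y, hy1, hy2⟩ := hx (t ∩ c x) (Filter.inter_mem ht (hc1 x))
      exact ⟨y, hy1.1, hy2, hy1.2⟩
    have hsub : closure (A ∩ c x) ⊆ c x :=
      closure_minimal inter_subset_right (hc2 x).isClosed
    refine mem_iUnion.2 ⟨⟨A ∩ c x, inter_subset_left, (hc3 x).mono inter_subset_right,
      (hc3 x).mono hsub⟩, hxm⟩
  have h1 : #(closure A) ≤ #(⋃ S : T, closure (S : Set X)) := Cardinal.mk_le_mk_of_subset hcov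
  have h2 : #(⋃ S : T, closure (S : Set X)) ≤ #T * ⨆ S : T, #(closure (S : Set X)) :=
    Cardinal.mk_iUnion_le _
  have h3 : #T ≤ Cardinal.aleph 1 := by
    refine le_trans (Cardinal.mk_le_mk_of_subset ?_) (card_ctble_subsets_le CH hA)
    intro S hS
    exact ⟨hS.1, hS.2.1⟩
  have h4 : (⨆ S : T, #(closure (S : Set X))) ≤ Cardinal.aleph 1 := by
    refine ciSup_le' fun S => ?_
    have := S.2.2.2
    have : #(closure (S : Set X)) ≤ ℵ₀ := by
      have := this.to_subtype
      exact Cardinal.mk_le_aleph0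
    exact this.trans (Cardinal.aleph0_le_aleph 1)
  calc #(closure A) ≤ #T * ⨆ S : T, #(closure (S : Set X)) := h1.trans h2
    _ ≤ Cardinal.aleph 1 * Cardinal.aleph 1 := by exact mul_le_mul' h3 h4
    _ = Cardinal.aleph 1 := Cardinal.mul_eq_self (Cardinal.aleph0_le_aleph 1)

/-- Transfinite iteration of a `step` operation along `ω₁`. -/
noncomputable def hull {X : Type u} (step : Set X → Set X)
    (i : (Cardinal.aleph 1 : Cardinal.{u}).ord.ToType) : Set X :=
  step (⋃ j : {j : (Cardinal.aleph 1 : Cardinal.{u}).ord.ToType // j < i}, hull step j.1)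
termination_by i
decreasing_by exact j.2

lemma hull_eq {X : Type u} (step : Set X → Set X) (i) :
    hull step i
      = step (⋃ j : {j : (Cardinal.aleph 1 : Cardinal.{u}).ord.ToType // j < i},
          hull step j.1) := by
  rw [hull]

/-- Any countable family in `ω₁` is bounded. -/
lemma exists_bound {ι : Type u} [Countable ι]
    (f : ι → (Cardinal.aleph 1 : Cardinal.{u}).ord.ToType) :
    ∃ i, ∀ n, f n < i := by
  have hlim : Order.IsSuccLimit (Cardinal.aleph 1 : Cardinal.{u}).ord :=
    Cardinal.isSuccLimit_ord (Cardinal.aleph0_le_aleph 1)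
  let e := Ordinal.ToType.mk (o := (Cardinal.aleph 1 : Cardinal.{u}).ord)
  let g : ι → Ordinal.{u} := fun n => (e.symm (f n)).1
  have hlt : (⨆ n, g n) < (Cardinal.aleph 1 : Cardinal.{u}).ord := by
    apply Cardinal.iSup_lt_ord_of_isRegular
      Cardinal.isRegular_aleph_one
    · exact lt_of_le_of_lt Cardinal.mk_le_aleph0 (by simpa using Cardinal.aleph0_lt_aleph_one)
    · intro n; exact (e.symm (f n)).2
  have hlt1 : (⨆ n, g n) + 1 < (Cardinal.aleph 1 : Cardinal.{u}).ord := by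
    rw [Ordinal.add_one_eq_succ]; exact hlim.succ_lt hlt
  refine ⟨e ⟨(⨆ n, g n) + 1, hlt1⟩, fun n => ?_⟩
  have h1 : e.symm (f n) < ⟨(⨆ n, g n) + 1, hlt1⟩ := by
    show g n < (⨆ n, g n) + 1
    exact lt_of_le_of_lt (Ordinal.le_iSup g n)
      (by rw [Ordinal.add_one_eq_succ]; exact Order.lt_succ _)
  have h2 := e.lt_iff_lt.2 h1
  rwa [OrderIso.apply_symm_apply] at h2

/-- The key construction: under CH there is a clopen subset `Y` of size at most `ℵ₁` on which
the moving off collection traces a moving off collection. -/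
lemma exists_Y {X : Type u} [TopologicalSpace X] [T2Space X] [LocallyCompactSpace X]
    (CH : (Cardinal.continuum : Cardinal.{u}) = Cardinal.aleph 1) (hlc : LocallyCountable X)
    {𝒦 : Set (Set X)} (hmo : IsMovingOff 𝒦) :
    ∃ Y : Set X, IsClosed Y ∧ IsOpen Y ∧ #Y ≤ Cardinal.aleph 1 ∧
      ∀ L : Set X, L ⊆ Y → IsCompact L → ∃ K ∈ 𝒦, K ⊆ Y ∧ Disjoint K L := by
  classical
  choose c hc1 hc2 hc3 using exists_cpt_ctble_nhd hlc
  have hmo3 := hmo.2.2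
  let kk : Set X → Set X := fun L => if h : IsCompact L then (hmo3 L h).choose else ∅
  have hkk : ∀ L, IsCompact L → kk L ∈ 𝒦 ∧ Disjoint (kk L) L := by
    intro L hL
    have h1 := (hmo3 L hL).choose_spec
    simpa only [kk, dif_pos hL] using h1
  let step : Set X → Set X := fun A =>
    (closure A ∪ ⋃ y ∈ closure A, c y) ∪ ⋃ L ∈ {L : Set X | L ⊆ A ∧ IsCompact L}, kk L
  have hstep : ∀ A : Set X, A ⊆ step A := fun A =>
    subset_closure.trans (subset_union_left.trans subset_union_left)
  have hclosure : ∀ A : Set X, closure A ⊆ step A := fun A =>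
    subset_union_left.trans subset_union_left
  have hcnbhd : ∀ (A : Set X) (y : X), y ∈ closure A → c y ⊆ step A := by
    intro A y hy
    refine subset_trans ?_ (subset_trans subset_union_right subset_union_left)
    exact subset_biUnion_of_mem (u := fun y => c y) (show y ∈ closure A from hy)
  have hkkmem : ∀ (A : Set X) (L : Set X), L ⊆ A → IsCompact L → kk L ⊆ step A := by
    intro A L h1 h2
    refine subset_trans ?_ subset_union_right
    exact subset_biUnion_of_mem (u := fun L => kk L)
      (show L ∈ {L : Set X | L ⊆ A ∧ IsCompact L} from ⟨h1, h2⟩)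
  -- cardinality of one step
  have hstepcard : ∀ A : Set X, #A ≤ Cardinal.aleph 1 → #(step A) ≤ Cardinal.aleph 1 := by
    intro A hA
    have h1 : #(closure A) ≤ Cardinal.aleph 1 := card_closure_le CH hlc hA
    have h2 : #(⋃ y ∈ closure A, c y) ≤ Cardinal.aleph 1 := by
      refine le_trans (Cardinal.mk_biUnion_le _ _) ?_
      have : (⨆ y : closure A, #(c (y : X))) ≤ Cardinal.aleph 1 := by
        refine ciSup_le' fun y => ?_
        have := (hc3 (y : X)).to_subtype
        exact Cardinal.mk_le_aleph0.trans (Cardinal.aleph0_le_aleph 1)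
      calc #(closure A) * ⨆ y : closure A, #(c (y : X))
          ≤ Cardinal.aleph 1 * Cardinal.aleph 1 := mul_le_mul' h1 this
        _ = Cardinal.aleph 1 := Cardinal.mul_eq_self (Cardinal.aleph0_le_aleph 1)
    have h3 : #(⋃ L ∈ {L : Set X | L ⊆ A ∧ IsCompact L}, kk L) ≤ Cardinal.aleph 1 := by
      refine le_trans (Cardinal.mk_biUnion_le _ _) ?_
      have hidx : #{L : Set X | L ⊆ A ∧ IsCompact L} ≤ Cardinal.aleph 1 := by
        refine le_trans (Cardinal.mk_le_mk_of_subset ?_) (card_ctble_subsets_le CH hA)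
        intro L hL
        exact ⟨hL.1, compact_countable hlc hL.2⟩
      have hsup : (⨆ L : {L : Set X | L ⊆ A ∧ IsCompact L}, #(kk (L : Set X)))
          ≤ Cardinal.aleph 1 := by
        refine ciSup_le' fun L => ?_
        have hcpt : IsCompact (kk (L : Set X)) := hmo.2.1 _ ((hkk _ L.2.2).1)
        have := (compact_countable hlc hcpt).to_subtype
        exact Cardinal.mk_le_aleph0.trans (Cardinal.aleph0_le_aleph 1)
      calc _ ≤ Cardinal.aleph 1 * Cardinal.aleph 1 := mul_le_mul' hidx hsup
        _ = Cardinal.aleph 1 := Cardinal.mul_eq_self (Cardinal.aleph0_le_aleph 1)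
    calc #(step A) ≤ #(↥(closure A ∪ ⋃ y ∈ closure A, c y))
          + #(↥(⋃ L ∈ {L : Set X | L ⊆ A ∧ IsCompact L}, kk L)) := Cardinal.mk_union_le _ _
      _ ≤ (#(closure A) + #(↥(⋃ y ∈ closure A, c y))) + Cardinal.aleph 1 := by
          gcongr
          exact Cardinal.mk_union_le _ _
      _ ≤ (Cardinal.aleph 1 + Cardinal.aleph 1) + Cardinal.aleph 1 := by gcongr
      _ = Cardinal.aleph 1 := by
          rw [Cardinal.add_eq_self (Cardinal.aleph0_le_aleph 1),
            Cardinal.add_eq_self (Cardinal.aleph0_le_aleph 1)]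
  -- the hull
  set Y : Set X := ⋃ i : (Cardinal.aleph 1 : Cardinal.{u}).ord.ToType, hull step i with hYdef
  have hmono : ∀ (i j : (Cardinal.aleph 1 : Cardinal.{u}).ord.ToType), j < i →
      hull step j ⊆ hull step i := by
    intro i j hji
    rw [hull_eq step i]
    exact subset_trans (subset_iUnion_of_subset ⟨j, hji⟩ subset_rfl) (hstep _)
  have hbdd : ∀ S : Set X, S.Countable → S ⊆ Y →
      ∃ i, S ⊆ ⋃ j : {j : (Cardinal.aleph 1 : Cardinal.{u}).ord.ToType // j < i},
        hull step j.1 := by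
    intro S hSc hSY
    have hgex : ∀ x : S, ∃ i, (x : X) ∈ hull step i := fun x => mem_iUnion.1 (hSY x.2)
    choose g hg using hgex
    haveI := hSc.to_subtype
    obtain ⟨i, hi⟩ := exists_bound g
    refine ⟨i, fun x hx => ?_⟩
    exact mem_iUnion.2 ⟨⟨g ⟨x, hx⟩, hi ⟨x, hx⟩⟩, hg ⟨x, hx⟩⟩
  have hYF_sub_Y : ∀ i, hull step i ⊆ Y := fun i => subset_iUnion (hull step) i
  -- cardinality
  have hYFcard : ∀ i, #(hull step i) ≤ Cardinal.aleph 1 := by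
    intro i
    induction i using WellFoundedLT.induction with
    | _ i IH =>
      rw [hull_eq step i]
      apply hstepcard
      refine le_trans (Cardinal.mk_iUnion_le _) ?_
      have h1 : #{j : (Cardinal.aleph 1 : Cardinal.{u}).ord.ToType // j < i}
          ≤ Cardinal.aleph 1 := by
        refine le_trans (Cardinal.mk_subtype_le _) ?_
        rw [Cardinal.mk_toType, Cardinal.card_ord]
      have h2 : (⨆ j : {j : (Cardinal.aleph 1 : Cardinal.{u}).ord.ToType // j < i},
          #(hull step j.1)) ≤ Cardinal.aleph 1 := ciSup_le' fun j => IH j.1 j.2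
      calc _ ≤ Cardinal.aleph 1 * Cardinal.aleph 1 := mul_le_mul' h1 h2
        _ = Cardinal.aleph 1 := Cardinal.mul_eq_self (Cardinal.aleph0_le_aleph 1)
  have hYcard : #Y ≤ Cardinal.aleph 1 := by
    rw [hYdef]
    refine le_trans (Cardinal.mk_iUnion_le _) ?_
    have h1 : #((Cardinal.aleph 1 : Cardinal.{u}).ord.ToType) ≤ Cardinal.aleph 1 := by
      rw [Cardinal.mk_toType, Cardinal.card_ord]
    calc _ ≤ Cardinal.aleph 1 * Cardinal.aleph 1 :=
          mul_le_mul' h1 (ciSup_le' fun i => hYFcard i)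
      _ = Cardinal.aleph 1 := Cardinal.mul_eq_self (Cardinal.aleph0_le_aleph 1)
  -- closedness
  have hYclosed : IsClosed Y := by
    rw [← closure_subset_iff_isClosed]
    intro x hx
    have hxm : x ∈ closure (Y ∩ c x) := by
      rw [mem_closure_iff_nhds] at hx ⊢
      intro t ht
      obtain ⟨y, hy1, hy2⟩ := hx (t ∩ c x) (Filter.inter_mem ht (hc1 x))
      exact ⟨y, hy1.1, hy2, hy1.2⟩
    obtain ⟨i, hi⟩ := hbdd (Y ∩ c x) ((hc3 x).mono inter_subset_right) inter_subset_left
    have hxcl : x ∈ closure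
        (⋃ j : {j : (Cardinal.aleph 1 : Cardinal.{u}).ord.ToType // j < i}, hull step j.1) :=
      closure_mono hi hxm
    refine hYF_sub_Y i ?_
    rw [hull_eq step i]
    exact hclosure _ hxcl
  -- openness
  have hYopen : IsOpen Y := by
    rw [isOpen_iff_mem_nhds]
    intro x hx
    obtain ⟨i, hi⟩ := hbdd {x} (countable_singleton x) (singleton_subset_iff.2 hx)
    have hxmem : x ∈ closure
        (⋃ j : {j : (Cardinal.aleph 1 : Cardinal.{u}).ord.ToType // j < i}, hull step j.1) :=
      subset_closure (hi rfl)
    have hcx : c x ⊆ hull step i := by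
      rw [hull_eq step i]
      exact hcnbhd _ x hxmem
    exact Filter.mem_of_superset (hc1 x) (hcx.trans (hYF_sub_Y i))
  -- trace moving off
  refine ⟨Y, hYclosed, hYopen, hYcard, ?_⟩
  intro L hLY hLcpt
  obtain ⟨i, hi⟩ := hbdd L (compact_countable hlc hLcpt) hLY
  have : kk L ⊆ hull step i := by
    rw [hull_eq step i]
    exact hkkmem _ L hi hLcpt
  exact ⟨kk L, (hkk L hLcpt).1, this.trans (hYF_sub_Y i), (hkk L hLcpt).2⟩

end MOPAux

/-- Corollary 16: under CH, if `X` is locally compact, locally countable, Hausdorff, and every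
closed subspace of cardinality at most `ℵ₁` is paracompact, then `X` has the MOP. -/
theorem mop_of_small_closed_paracompact_CH (CH : Cardinal.continuum = Cardinal.aleph 1)
    (X : Type*) [TopologicalSpace X] [T2Space X] [LocallyCompactSpace X]
    (hlc : LocallyCountable X)
    (h : ∀ Y : Set X, IsClosed Y → Cardinal.mk Y ≤ Cardinal.aleph 1 → ParacompactSpace Y) :
    HasMOP X := by
  classical
  intro 𝒦 hmo
  obtain ⟨Y, hYclosed, hYopen, hYcard, hYtrace⟩ :=
    MOPAux.exists_Y (MOPAux.CH_transfer CH) hlc hmo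
  haveI : ParacompactSpace Y := h Y hYclosed hYcard
  -- relatively compact open neighborhoods
  have hOex : ∀ x : X, ∃ O : Set X, IsOpen O ∧ x ∈ O ∧ IsCompact (closure O) := by
    intro x
    obtain ⟨C, hCn, hCc, -⟩ := MOPAux.exists_cpt_ctble_nhd hlc x
    refine ⟨interior C, isOpen_interior, mem_interior_iff_mem_nhds.2 hCn, ?_⟩
    exact hCc.of_isClosed_subset isClosed_closure
      (closure_minimal interior_subset hCc.isClosed)
  choose O hOopen hOmem hOcpt using hOex
  -- a locally finite cover of Y by relatively compact open subsets of X
  obtain ⟨β, v, hvo, hvcov, hvlf, hvsub⟩ :=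
    ParacompactSpace.locallyFinite_refinement (X := Y) Y
      (fun i => (Subtype.val : Y → X) ⁻¹' O i)
      (fun i => (hOopen _).preimage continuous_subtype_val)
      (by
        rw [Set.iUnion_eq_univ_iff]
        exact fun y => ⟨y, hOmem y⟩)
  set V : β → Set X := fun b => Subtype.val '' v b with hV
  have hVopen : ∀ b, IsOpen (V b) := fun b => hYopen.isOpenMap_subtype_val _ (hvo b)
  have hVsubY : ∀ b, V b ⊆ Y := by
    rintro b x ⟨y, -, rfl⟩
    exact y.2
  have hVsubO : ∀ b, ∃ i, V b ⊆ O i := by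
    intro b
    obtain ⟨i, hi⟩ := hvsub b
    refine ⟨i, ?_⟩
    rintro x ⟨y, hy, rfl⟩
    exact hi hy
  have hVcpt : ∀ b, IsCompact (closure (V b)) := by
    intro b
    obtain ⟨i, hi⟩ := hVsubO b
    exact (hOcpt i).of_isClosed_subset isClosed_closure (closure_mono hi)
  have hVcovY : ∀ x ∈ Y, ∃ b, x ∈ V b := by
    intro x hx
    have : (⟨x, hx⟩ : Y) ∈ ⋃ b, v b := by rw [hvcov]; trivial
    obtain ⟨b, hb⟩ := mem_iUnion.1 this
    exact ⟨b, ⟨⟨x, hx⟩, hb, rfl⟩⟩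
  have hVlf : LocallyFinite V := by
    intro x
    by_cases hx : x ∈ Y
    · obtain ⟨t, ht, htf⟩ := hvlf ⟨x, hx⟩
      refine ⟨Subtype.val '' t, hYopen.isOpenMap_subtype_val.image_mem_nhds ht, htf.subset ?_⟩
      rintro b ⟨z, ⟨⟨y, hyv, rfl⟩, y', hy't, hyy'⟩⟩
      refine ⟨y, hyv, ?_⟩
      have : y = y' := Subtype.ext hyy'.symm
      rw [this]; exact hy't
    · refine ⟨Yᶜ, hYclosed.isOpen_compl.mem_nhds hx, ?_⟩
      have : {b | (V b ∩ Yᶜ).Nonempty} = ∅ := by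
        ext b
        simp only [mem_setOf_eq, mem_empty_iff_false, iff_false]
        rintro ⟨z, hz1, hz2⟩
        exact hz2 (hVsubY b hz1)
      rw [this]
      exact finite_empty
  -- the star operator
  set St : Set X → Set X := fun L => ⋃ b ∈ {b | (V b ∩ L).Nonempty}, V b with hSt
  have hStopen : ∀ L, IsOpen (St L) := fun L => isOpen_biUnion fun b _ => hVopen b
  have hStsub : ∀ L : Set X, L ⊆ Y → L ⊆ St L := by
    intro L hLY x hx
    obtain ⟨b, hb⟩ := hVcovY x (hLY hx)
    exact mem_biUnion ⟨x, hb, hx⟩ hb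
  have hStsubY : ∀ L, St L ⊆ Y := fun L => iUnion₂_subset fun b _ => hVsubY b
  have hStcpt : ∀ L : Set X, IsCompact L → IsCompact (closure (St L)) := by
    intro L hL
    have hfin : {b | (V b ∩ L).Nonempty}.Finite := hVlf.finite_nonempty_inter_compact hL
    rw [hSt]
    rw [hfin.closure_biUnion]
    exact hfin.isCompact_biUnion fun b _ => hVcpt b
  -- choice of moving-off members
  set pick : Set X → Set X := fun L =>
    if hL : IsCompact L ∧ L ⊆ Y then (hYtrace L hL.2 hL.1).choose else ∅ with hpickdef
  have hpick : ∀ L : Set X, IsCompact L → L ⊆ Y →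
      pick L ∈ 𝒦 ∧ pick L ⊆ Y ∧ Disjoint (pick L) L := by
    intro L h1 h2
    have hh := (hYtrace L h2 h1).choose_spec
    rw [hpickdef]
    simp only [dif_pos (⟨h1, h2⟩ : IsCompact L ∧ L ⊆ Y)]
    exact ⟨hh.1, hh.2.1, hh.2.2⟩
  -- the exhaustion
  set C : ℕ → Set X := fun n =>
    Nat.rec (∅ : Set X) (fun _ Cn => closure (St (Cn ∪ pick Cn))) n with hC
  have hC0 : C 0 = (∅ : Set X) := rfl
  have hCsucc : ∀ n, C (n + 1) = closure (St (C n ∪ pick (C n))) := fun n => rfl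
  have hCinv : ∀ n, IsCompact (C n) ∧ C n ⊆ Y := by
    intro n
    induction n with
    | zero => exact ⟨isCompact_empty, empty_subset Y⟩
    | succ n IH =>
      have hp := hpick (C n) IH.1 IH.2
      have hcpt : IsCompact (C n ∪ pick (C n)) := IH.1.union (hmo.2.1 _ hp.1)
      constructor
      · rw [hCsucc]; exact hStcpt _ hcpt
      · rw [hCsucc]
        calc closure (St (C n ∪ pick (C n))) ⊆ closure Y := closure_mono (hStsubY _)
          _ = Y := hYclosed.closure_eq
  set K : ℕ → Set X := fun n => pick (C n) with hK
  have hKprop : ∀ n, K n ∈ 𝒦 ∧ K n ⊆ Y ∧ Disjoint (K n) (C n) :=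
    fun n => hpick (C n) (hCinv n).1 (hCinv n).2
  have hCK_star : ∀ n, C n ∪ K n ⊆ St (C n ∪ K n) :=
    fun n => hStsub _ (union_subset (hCinv n).2 (hKprop n).2.1)
  have hCint : ∀ n, C n ∪ K n ⊆ interior (C (n + 1)) := by
    intro n
    refine subset_trans (hCK_star n) ?_
    refine (hStopen _).subset_interior_iff.2 ?_
    rw [hCsucc]
    exact subset_closure
  have hCmono : ∀ {m n : ℕ}, m ≤ n → C m ⊆ C n := by
    intro m n hmn
    induction n with
    | zero => rw [Nat.le_zero.1 hmn]
    | succ n IH =>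
      rcases Nat.lt_or_ge m (n + 1) with hlt | hge
      · refine subset_trans (IH (Nat.lt_succ_iff.1 hlt)) ?_
        exact subset_trans (subset_union_left.trans (hCint n)) interior_subset
      · rw [Nat.le_antisymm hmn hge]
  -- the union is clopen
  set Z : Set X := ⋃ n, C n with hZ
  have hZsubY : Z ⊆ Y := iUnion_subset fun n => (hCinv n).2
  have hZclosed : IsClosed Z := by
    rw [← closure_subset_iff_isClosed]
    intro x hx
    have hxY : x ∈ Y := by
      have : closure Z ⊆ closure Y := closure_mono hZsubY
      rw [hYclosed.closure_eq] at this
      exact this hx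
    obtain ⟨b, hb⟩ := hVcovY x hxY
    have hne : (V b ∩ Z).Nonempty := by
      rw [mem_closure_iff_nhds] at hx
      obtain ⟨z, hz1, hz2⟩ := hx (V b) ((hVopen b).mem_nhds hb)
      exact ⟨z, hz1, hz2⟩
    obtain ⟨z, hzV, hzZ⟩ := hne
    obtain ⟨n, hzn⟩ := mem_iUnion.1 hzZ
    have hbmem : b ∈ {b | (V b ∩ (C n ∪ K n)).Nonempty} := ⟨z, hzV, Or.inl hzn⟩
    have : V b ⊆ C (n + 1) := by
      rw [hCsucc]
      exact subset_trans (subset_biUnion_of_mem hbmem) subset_closure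
    exact mem_iUnion.2 ⟨n + 1, this hb⟩
  -- conclusion
  refine ⟨fun n => K (3 * n), fun n => (hKprop _).1, ?_, ?_⟩
  · -- injectivity
    have main : ∀ m n : ℕ, m < n → K (3 * m) ≠ K (3 * n) := by
      intro m n hlt heq
      have hsub : K (3 * m) ⊆ C (3 * n) :=
        (subset_union_right.trans (hCint (3 * m))).trans
          (interior_subset.trans (hCmono (show 3 * m + 1 ≤ 3 * n by omega)))
      obtain ⟨x, hx⟩ := hmo.1 _ (hKprop (3 * n)).1
      have hx' : x ∈ C (3 * n) := hsub (by rw [heq]; exact hx)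
      exact (hKprop (3 * n)).2.2.ne_of_mem hx hx' rfl
    intro m n hmn
    have hmn' : K (3 * m) = K (3 * n) := hmn
    by_contra hne
    rcases Ne.lt_or_gt hne with hlt | hlt
    · exact main m n hlt hmn'
    · exact main n m hlt hmn'.symm
  · -- the discrete open expansion
    refine ⟨fun n => interior (C (3 * n + 2)) \ C (3 * n), ?_, ?_, ?_⟩
    · exact fun n => isOpen_interior.sdiff (hCinv _).1.isClosed
    · intro n
      have h1 : K (3 * n) ⊆ interior (C (3 * n + 2)) := by
        refine subset_trans (subset_union_right.trans (hCint (3 * n))) ?_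
        exact interior_mono (hCmono (show 3 * n + 1 ≤ 3 * n + 2 by omega))
      have h2 : Disjoint (K (3 * n)) (C (3 * n)) := (hKprop (3 * n)).2.2
      intro x hx
      exact ⟨h1 hx, fun hc => h2.ne_of_mem hx hc rfl⟩
    · -- discreteness
      intro x
      by_cases hx : x ∈ Z
      · obtain ⟨n₀, hn₀⟩ := mem_iUnion.1 hx
        have hex : ∃ n, x ∈ C (n + 1) := by
          cases n₀ with
          | zero => rw [hC0] at hn₀; exact absurd hn₀ (notMem_empty x)
          | succ m => exact ⟨m, hn₀⟩
        set m := Nat.find hex with hm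
        have hxm : x ∈ C (m + 1) := Nat.find_spec hex
        have hxm' : x ∉ C m := by
          cases hm' : m with
          | zero => rw [hC0]; exact notMem_empty x
          | succ k => exact Nat.find_min hex (by omega)
        refine ⟨interior (C (m + 2)) \ C m, ?_, ?_⟩
        · refine (isOpen_interior.sdiff (hCinv m).1.isClosed).mem_nhds ?_
          exact ⟨(subset_union_left.trans (hCint (m + 1))) hxm, hxm'⟩
        · intro n₁ hn₁ n₂ hn₂
          have key : ∀ n, ((interior (C (3 * n + 2)) \ C (3 * n)) ∩
              (interior (C (m + 2)) \ C m)).Nonempty → 3 * n ≤ m + 1 ∧ m ≤ 3 * n + 1 := by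
            intro n ⟨w, ⟨hw1, hw2⟩, ⟨hw3, hw4⟩⟩
            constructor
            · by_contra hcon
              exact hw2 ((hCmono (show m + 2 ≤ 3 * n by omega)) (interior_subset hw3))
            · by_contra hcon
              exact hw4 ((hCmono (show 3 * n + 2 ≤ m by omega)) (interior_subset hw1))
          obtain ⟨h1, h2⟩ := key n₁ hn₁
          obtain ⟨h3, h4⟩ := key n₂ hn₂
          omega
      · refine ⟨Zᶜ, hZclosed.isOpen_compl.mem_nhds hx, ?_⟩
        intro n₁ hn₁ n₂ hn₂
        exfalso
        obtain ⟨w, hw1, hw2⟩ := hn₁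
        exact hw2 (mem_iUnion.2 ⟨3 * n₁ + 2, interior_subset hw1.1⟩)
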